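/- Monotone distance key inequality (Case 2 of Theorem 4.4): let β, δ > 0, let d, d', w ≥ 0 with 0 < d, w ≤ d, d' ≤ d, and d' + w ≥ d (so d'/(d − w) ≥ 1 when w < d). Let q ∈ [0, 1) satisfy q ≥ β·(d'/(d − w) − 1), and let Δ ≥ 1 + 1/β. Then Δ·q + Δ·(1 − q)·(1 − d'/d) ≥ q + (1 − q)·(w/d). -/

import Mathlib

/-- Monotone-distance key inequality, Case 2 (`q < βδ`) of Theorem 4.4:
with `q ≥ β·(d'/(d-w) - 1)` and `Δ ≥ 1 + 1/β`,
`Δ·q + Δ·(1-q)·(1 - d'/d) ≥ q + (1-q)·(w/d)`. -/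
theorem stmt_15 (β δ d d' w q Δ : ℝ)
    (hβ : 0 < β) (hδ : 0 < δ) (hd : 0 < d)
    (hw0 : 0 ≤ w) (hwd : w < d)
    (hd'0 : 0 ≤ d') (hd'd : d' ≤ d)
    (hdw : d ≤ d' + w)
    (hq0 : 0 ≤ q) (hq1 : q < 1)
    (hq : β * (d' / (d - w) - 1) ≤ q)
    (hΔ : 1 + 1 / β ≤ Δ) :
    q + (1 - q) * (w / d) ≤ Δ * q + Δ * (1 - q) * (1 - d' / d) := by
  have hdw' : (0:ℝ) < d - w := sub_pos.2 hwd
  have hβ' : 0 < 1 / β := by positivity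
  have hΔ1 : (1:ℝ) ≤ Δ := by linarith
  have h1 : d' / (d - w) - 1 ≤ q / β := (le_div_iff₀ hβ).mpr (by linarith [mul_comm β (d' / (d - w) - 1)])
  have h2 : d' ≤ (q / β + 1) * (d - w) := by
    have := (div_le_iff₀ hdw').mp (by linarith : d' / (d - w) ≤ q / β + 1)
    linarith
  have h3 : (d' + w - d) / d ≤ q / β := by
    have ha : (0:ℝ) ≤ d' + w - d := by linarith
    have hb : (d' + w - d) / d ≤ (d' + w - d) / (d - w) :=
      div_le_div_of_nonneg_left ha hdw' (by linarith)
    have hc : (d' + w - d) / (d - w) ≤ q / β := by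
      rw [div_le_iff₀ hdw']
      linarith
    linarith
  have hs : 0 ≤ 1 - d' / d := by
    have : d' / d ≤ 1 := (div_le_one hd).mpr hd'd
    linarith
  have key : (1 - q) * (w / d) ≤ q / β + (1 - q) * (1 - d' / d) := by
    have hwd2 : w / d = (d' + w - d) / d + (1 - d' / d) := by field_simp; ring
    rw [hwd2]
    have h4 : (1 - q) * ((d' + w - d) / d) ≤ q / β := by
      have ha : (0:ℝ) ≤ (d' + w - d) / d := div_nonneg (by linarith) hd.le
      nlinarith
    nlinarith
  have hΔq : q * (1 + 1 / β) ≤ Δ * q := by nlinarith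
  have hΔs : (1 - q) * (1 - d' / d) ≤ Δ * (1 - q) * (1 - d' / d) := by nlinarith [mul_nonneg (mul_nonneg (by linarith : (0:ℝ) ≤ Δ - 1) (by linarith : (0:ℝ) ≤ 1 - q)) hs]
  have hq' : q * (1/β) = q / β := by ring
  nlinarith
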